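/- For m = 5 candidates and k = 3, the vote distribution x with x[{c2,c4}] = x[{c2,c5}] = x[{c4,c5}] = x[{c1,c2,c5}] = 1/4 (0 otherwise) admits a committee W = {c1,c2,c3} that is Droop core-stable but not weakly priceable. -/
import Mathlib


/-- The counterexample distribution for `m = 5`, `k = 3` (candidate `cᵢ` is
`i - 1 : Fin 5`): mass `1/4` on `{c2,c4}, {c2,c5}, {c4,c5}, {c1,c2,c5}`. -/
def x16 : Finset (Fin 5) → ℚ := fun A =>
  if A = {1, 3} ∨ A = {1, 4} ∨ A = {3, 4} ∨ A = {0, 1, 4} then 1/4 else 0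

lemma key16 : ∀ W' : Finset (Fin 5), W'.card ≤ 3 →
    (Finset.univ.filter (fun A : Finset (Fin 5) =>
      ((A ∩ ({0,1,2} : Finset (Fin 5))).card < (A ∩ W').card) ∧
      (A = {1,3} ∨ A = {1,4} ∨ A = {3,4} ∨ A = {0,1,4}))).card ≤ W'.card := by
  decide

lemma sum_x16 (f : Finset (Fin 5) → ℚ) :
    ∑ A : Finset (Fin 5), x16 A * f A
      = 1/4 * f {1,3} + 1/4 * f {1,4} + 1/4 * f {3,4} + 1/4 * f {0,1,4} := by
  rw [← Finset.sum_subset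
    (Finset.subset_univ ({{1,3},{1,4},{3,4},{0,1,4}} : Finset (Finset (Fin 5))))]
  · rw [show ({{1,3},{1,4},{3,4},{0,1,4}} : Finset (Finset (Fin 5)))
        = insert {1,3} (insert {1,4} (insert {3,4} {({0,1,4} : Finset (Fin 5))})) from rfl]
    rw [Finset.sum_insert (by decide), Finset.sum_insert (by decide),
        Finset.sum_insert (by decide), Finset.sum_singleton]
    have h1 : x16 {1,3} = 1/4 := by norm_num [x16]
    have h2 : x16 {1,4} = 1/4 := by norm_num [x16]
    have h3 : x16 {3,4} = 1/4 := by norm_num [x16]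
    have h4 : x16 {0,1,4} = 1/4 := by norm_num [x16]
    rw [h1, h2, h3, h4]; ring
  · intro A _ hA
    have : x16 A = 0 := by
      simp only [x16, Finset.mem_insert, Finset.mem_singleton] at *
      split_ifs with h
      · exact absurd h hA
      · rfl
    rw [this, zero_mul]

/-- for `m = 5`, `k = 3`, the committee `W = {c1,c2,c3}` is Droop
core-stable w.r.t. `x16` but not weakly priceable. -/
theorem stmt16 :
    (∀ W' : Finset (Fin 5), W'.Nonempty → W'.card ≤ 3 →
      (∑ A ∈ Finset.univ.filter
          (fun A : Finset (Fin 5) =>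
            (A ∩ ({0, 1, 2} : Finset (Fin 5))).card < (A ∩ W').card), x16 A)
        ≤ (W'.card : ℚ) / 4) ∧
    ¬ (∃ p : Finset (Fin 5) → Fin 5 → ℚ,
        (∀ A c, 0 ≤ p A c) ∧
        (∀ c, (∑ A : Finset (Fin 5), x16 A * p A c) ≤ 1 / 3) ∧
        (∀ A : Finset (Fin 5), 0 < x16 A →
          ∀ d ∈ A \ ({0, 1, 2} : Finset (Fin 5)),
            1 < ∑ c ∈ insert d (A ∩ ({0, 1, 2} : Finset (Fin 5))), p A c)) := by
  constructor
  · intro W' _ h3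
    have h1 : (∑ A ∈ Finset.univ.filter
            (fun A : Finset (Fin 5) =>
              (A ∩ ({0, 1, 2} : Finset (Fin 5))).card < (A ∩ W').card), x16 A)
        = ((Finset.univ.filter (fun A : Finset (Fin 5) =>
        ((A ∩ ({0,1,2} : Finset (Fin 5))).card < (A ∩ W').card) ∧
        (A = {1,3} ∨ A = {1,4} ∨ A = {3,4} ∨ A = {0,1,4}))).card : ℚ) * (1/4) := by
      simp only [x16]
      rw [← Finset.filter_filter, ← Finset.sum_filter, Finset.sum_const, nsmul_eq_mul]
    rw [h1]
    have h2 : ((Finset.univ.filter (fun A : Finset (Fin 5) =>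
        ((A ∩ ({0,1,2} : Finset (Fin 5))).card < (A ∩ W').card) ∧
        (A = {1,3} ∨ A = {1,4} ∨ A = {3,4} ∨ A = {0,1,4}))).card : ℚ) ≤ (W'.card : ℚ) := by
      exact_mod_cast key16 W' h3
    linarith
  · rintro ⟨p, hpos, hbud, hcov⟩
    have b1 := hbud 1
    have b3 := hbud 3
    have b4 := hbud 4
    rw [sum_x16 (fun A => p A 1)] at b1
    rw [sum_x16 (fun A => p A 3)] at b3
    rw [sum_x16 (fun A => p A 4)] at b4
    have hx : ∀ A : Finset (Fin 5),
        (A = {1,3} ∨ A = {1,4} ∨ A = {3,4} ∨ A = {0,1,4}) → 0 < x16 A := by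
      intro A h; simp only [x16, if_pos h]; norm_num
    have c1 := hcov {1,3} (hx _ (by norm_num)) 3 (by decide)
    have c2 := hcov {1,4} (hx _ (by norm_num)) 4 (by decide)
    have c3 := hcov {3,4} (hx _ (by norm_num)) 3 (by decide)
    have c4 := hcov {3,4} (hx _ (by norm_num)) 4 (by decide)
    have e1 : insert (3 : Fin 5) (({1,3} : Finset (Fin 5)) ∩ {0,1,2}) = {3,1} := by decide
    have e2 : insert (4 : Fin 5) (({1,4} : Finset (Fin 5)) ∩ {0,1,2}) = {4,1} := by decide
    have e3 : insert (3 : Fin 5) (({3,4} : Finset (Fin 5)) ∩ {0,1,2}) = {3} := by decide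
    have e4 : insert (4 : Fin 5) (({3,4} : Finset (Fin 5)) ∩ {0,1,2}) = {4} := by decide
    rw [e1, Finset.sum_insert (by decide), Finset.sum_singleton] at c1
    rw [e2, Finset.sum_insert (by decide), Finset.sum_singleton] at c2
    rw [e3, Finset.sum_singleton] at c3
    rw [e4, Finset.sum_singleton] at c4
    have n1 := hpos {0,1,4} 1
    have n2 := hpos {1,3} 4
    have n3 := hpos {0,1,4} 4
    have n4 := hpos {1,4} 3
    have n5 := hpos {0,1,4} 3
    have n6 := hpos {3,4} 1
    linarith
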